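/- Define C(t) on ℓ² (square-summable complex sequences) as the diagonal operator with entries cos(n t), n ∈ ℕ, n ≥ 1. Then C is a strongly continuous cosine family satisfying limsup_{t→0⁺} ‖C(t) − I‖ = 2, and its generator (the diagonal operator with entries −n²) is unbounded. -/

import Mathlib

open Filter Topology
open scoped ENNReal

noncomputable section

local notation "Hsp" => lp (fun _ : ℕ+ => ℂ) 2

lemma h2pos : (0:ℝ) < (2:ℝ≥0∞).toReal := by norm_num

lemma memℓp_mul {g : ℕ+ → ℂ} {M : ℝ} (hg : ∀ n, ‖g n‖ ≤ M) (x : Hsp) :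
    Memℓp (fun n => g n * (x : ∀ _ : ℕ+, ℂ) n) 2 := by
  apply memℓp_gen
  have hx := (lp.memℓp x).summable (p := 2) h2pos
  have hM : 0 ≤ M := le_trans (norm_nonneg _) (hg 1)
  apply Summable.of_norm_bounded (hx.mul_left (M ^ (2:ℝ≥0∞).toReal))
  intro n
  rw [Real.norm_eq_abs, abs_of_nonneg (by positivity),
    ← Real.mul_rpow hM (norm_nonneg _), norm_mul]
  exact Real.rpow_le_rpow (by positivity)
    (mul_le_mul_of_nonneg_right (hg n) (norm_nonneg _)) (le_of_lt h2pos)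

lemma lp_norm_le {M : ℝ} (hM : 0 ≤ M) (y x : Hsp)
    (h : ∀ n, ‖(y : ∀ _ : ℕ+, ℂ) n‖ ≤ M * ‖(x : ∀ _ : ℕ+, ℂ) n‖) : ‖y‖ ≤ M * ‖x‖ := by
  have hy := lp.hasSum_norm h2pos y
  have hx := (lp.hasSum_norm h2pos x).mul_left (M ^ (2:ℝ≥0∞).toReal)
  have hle : ‖y‖ ^ (2:ℝ≥0∞).toReal ≤ M ^ (2:ℝ≥0∞).toReal * ‖x‖ ^ (2:ℝ≥0∞).toReal := by
    refine hasSum_le (fun n => ?_) hy hx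
    rw [← Real.mul_rpow hM (norm_nonneg _)]
    exact Real.rpow_le_rpow (norm_nonneg _) (h n) (le_of_lt h2pos)
  rw [← Real.mul_rpow hM (norm_nonneg _)] at hle
  rw [ENNReal.toReal_ofNat, Real.rpow_two, Real.rpow_two] at hle
  exact le_of_pow_le_pow_left₀ two_ne_zero (by positivity) hle

def diagCLM (g : ℕ+ → ℂ) (M : ℝ) (hM : 0 ≤ M) (hg : ∀ n, ‖g n‖ ≤ M) :
    Hsp →L[ℂ] Hsp :=
  LinearMap.mkContinuous
    { toFun := fun x => ⟨fun n => g n * (x : ∀ _ : ℕ+, ℂ) n, memℓp_mul hg x⟩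
      map_add' := fun x y => by
        apply lp.ext
        funext n
        simp [mul_add]
        rfl
      map_smul' := fun c x => by
        apply lp.ext
        funext n
        simp [lp.coeFn_smul]
        ring_nf }
    M
    (fun x => by
      apply lp_norm_le hM
      intro n
      change ‖g n * (x : ∀ _ : ℕ+, ℂ) n‖ ≤ _
      rw [norm_mul]
      exact mul_le_mul_of_nonneg_right (hg n) (norm_nonneg _))

lemma diagCLM_apply (g : ℕ+ → ℂ) (M : ℝ) (hM : 0 ≤ M) (hg : ∀ n, ‖g n‖ ≤ M) (x : Hsp) (n : ℕ+) :
    ((diagCLM g M hM hg x : Hsp) : ∀ _ : ℕ+, ℂ) n = g n * (x : ∀ _ : ℕ+, ℂ) n := rfl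

lemma diagCLM_norm_le (g : ℕ+ → ℂ) (M : ℝ) (hM : 0 ≤ M) (hg : ∀ n, ‖g n‖ ≤ M) :
    ‖diagCLM g M hM hg‖ ≤ M :=
  LinearMap.mkContinuous_norm_le _ hM _

lemma cos_bound (t : ℝ) : ∀ n : ℕ+, ‖((Real.cos (n * t) : ℝ) : ℂ)‖ ≤ 1 := fun n => by
  rw [Complex.norm_real, Real.norm_eq_abs]
  exact Real.abs_cos_le_one _

def Ccos (t : ℝ) : Hsp →L[ℂ] Hsp :=
  diagCLM (fun n => (Real.cos (n * t) : ℂ)) 1 zero_le_one (cos_bound t)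

lemma Ccos_apply (t : ℝ) (x : Hsp) (n : ℕ+) :
    ((Ccos t x : Hsp) : ∀ _ : ℕ+, ℂ) n = (Real.cos (n * t) : ℂ) * (x : ∀ _ : ℕ+, ℂ) n := rfl

lemma Ccos_zero : Ccos 0 = 1 := by
  ext x n
  rw [ContinuousLinearMap.one_apply, Ccos_apply]
  simp

lemma Ccos_dAlembert (t s : ℝ) : (2 : ℂ) • (Ccos t * Ccos s) = Ccos (t + s) + Ccos (t - s) := by
  ext x n
  rw [ContinuousLinearMap.smul_apply, ContinuousLinearMap.add_apply, lp.coeFn_smul, lp.coeFn_add]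
  simp only [Pi.smul_apply, Pi.add_apply, ContinuousLinearMap.mul_apply, Ccos_apply,
    smul_eq_mul]
  push_cast
  rw [mul_add, mul_sub, Complex.cos_add, Complex.cos_sub]
  ring

lemma Ccos_strong_continuous (x : Hsp) : Continuous fun t : ℝ => Ccos t x := by
  set F : Finset ℕ+ → ℝ → Hsp := fun s t =>
    ∑ m ∈ s, (Real.cos (m * t) : ℂ) • lp.single 2 m ((x : ∀ _ : ℕ+, ℂ) m) with hF
  have hFapp : ∀ s t n, ((F s t : Hsp) : ∀ _ : ℕ+, ℂ) n
      = if n ∈ s then (Real.cos (n * t) : ℂ) * (x : ∀ _ : ℕ+, ℂ) n else 0 := by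
    intro s t n
    rw [hF, lp.coeFn_sum, Finset.sum_apply]
    simp only [lp.coeFn_smul, Pi.smul_apply, lp.single_apply, smul_eq_mul]
    simp [Finset.sum_dite_eq', Pi.single_apply]
  have hFcont : ∀ s, Continuous (F s) := by
    intro s
    apply continuous_finset_sum
    intro m _
    exact ((Complex.continuous_ofReal.comp
      (Real.continuous_cos.comp (continuous_const.mul continuous_id))).smul continuous_const)
  have key : TendstoUniformly F (fun t => Ccos t x) atTop := by
    rw [Metric.tendstoUniformly_iff]
    intro ε hε
    have htail : Tendsto
        (fun s : Finset ℕ+ => ∑' n : {m : ℕ+ // m ∉ s}, ‖(x : ∀ _ : ℕ+, ℂ) n.1‖ ^ (2:ℝ≥0∞).toReal)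
        atTop (𝓝 0) := _root_.tendsto_tsum_compl_atTop_zero (fun n : ℕ+ => ‖(x : ∀ _ : ℕ+, ℂ) n‖ ^ (2:ℝ≥0∞).toReal)
    have hev : ∀ᶠ s : Finset ℕ+ in atTop,
        (∑' n : {m : ℕ+ // m ∉ s}, ‖(x : ∀ _ : ℕ+, ℂ) n.1‖ ^ (2:ℝ≥0∞).toReal) < ε ^ 2 := by
      exact htail.eventually_lt_const (by positivity)
    filter_upwards [hev] with s hs t
    rw [dist_eq_norm]
    set d : Hsp := Ccos t x - F s t with hd
    have hdapp : ∀ n, ((d : Hsp) : ∀ _ : ℕ+, ℂ) n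
        = if n ∈ s then 0 else (Real.cos (n * t) : ℂ) * (x : ∀ _ : ℕ+, ℂ) n := by
      intro n
      rw [hd, lp.coeFn_sub, Pi.sub_apply, hFapp, Ccos_apply]
      by_cases h : n ∈ s <;> simp [h]
    have hsum := lp.hasSum_norm h2pos d
    have hnorm : ‖d‖ ^ (2:ℝ≥0∞).toReal
        = ∑' n : {m : ℕ+ // m ∉ s}, ‖((d : Hsp) : ∀ _ : ℕ+, ℂ) n.1‖ ^ (2:ℝ≥0∞).toReal := by
      have hsupp : Function.support
          (fun n : ℕ+ => ‖((d : Hsp) : ∀ _ : ℕ+, ℂ) n‖ ^ (2:ℝ≥0∞).toReal) ⊆ {m : ℕ+ | m ∉ s} := by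
        intro n hn
        simp only [Function.mem_support] at hn
        by_contra h
        simp only [Set.mem_setOf_eq, not_not] at h
        exact hn (by rw [hdapp n, if_pos h]; simp [h2pos.ne'])
      rw [hsum.tsum_eq.symm]
      exact (tsum_subtype_eq_of_support_subset hsupp).symm
    have hle : ‖d‖ ^ (2:ℝ≥0∞).toReal
        ≤ ∑' n : {m : ℕ+ // m ∉ s}, ‖(x : ∀ _ : ℕ+, ℂ) n.1‖ ^ (2:ℝ≥0∞).toReal := by
      rw [hnorm]
      apply (((lp.memℓp d).summable h2pos).subtype _).tsum_le_tsum _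
        (((lp.memℓp x).summable h2pos).subtype _)
      rintro ⟨n, hn⟩
      apply Real.rpow_le_rpow (norm_nonneg _) _ (le_of_lt h2pos)
      rw [hdapp n, if_neg hn, norm_mul]
      calc ‖((Real.cos (n * t) : ℝ) : ℂ)‖ * ‖(x : ∀ _ : ℕ+, ℂ) n‖
          ≤ 1 * ‖(x : ∀ _ : ℕ+, ℂ) n‖ :=
            mul_le_mul_of_nonneg_right (cos_bound t n) (norm_nonneg _)
        _ = _ := one_mul _
    have h2 : ‖d‖ ^ 2 < ε ^ 2 := by
      have := lt_of_le_of_lt hle hs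
      rwa [ENNReal.toReal_ofNat, Real.rpow_two] at this
    nlinarith [norm_nonneg d]
  exact key.continuous (Eventually.of_forall hFcont).frequently

def eVec (n : ℕ+) : Hsp := lp.single 2 n 1

lemma eVec_norm (n : ℕ+) : ‖eVec n‖ = 1 := by
  have := lp.norm_single (E := fun _ : ℕ+ => ℂ) (p := 2) (by norm_num) n (1:ℂ)
  simpa [eVec] using this

lemma Ccos_sub_self_eVec (t : ℝ) (n : ℕ+) :
    Ccos t (eVec n) - eVec n = ((Real.cos (n * t) - 1 : ℝ) : ℂ) • eVec n := by
  apply lp.ext; funext m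
  rw [lp.coeFn_sub, Pi.sub_apply, lp.coeFn_smul, Pi.smul_apply, Ccos_apply]
  rcases eq_or_ne m n with rfl | h
  · rw [eVec, lp.single_apply_self]
    push_cast; simp
  · rw [eVec, lp.single_apply_ne _ _ _ h]
    simp

lemma Ccos_sub_one_norm_le (t : ℝ) : ‖Ccos t - 1‖ ≤ 2 := by
  apply ContinuousLinearMap.opNorm_le_bound _ (by norm_num)
  intro x
  apply lp_norm_le (by norm_num)
  intro n
  have h : (((Ccos t - 1) x : Hsp) : ∀ _ : ℕ+, ℂ) n
      = ((Real.cos (n * t) : ℂ) - 1) * (x : ∀ _ : ℕ+, ℂ) n := by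
    rw [ContinuousLinearMap.sub_apply, lp.coeFn_sub, Pi.sub_apply, Ccos_apply,
      ContinuousLinearMap.one_apply]
    ring
  rw [h, norm_mul]
  apply mul_le_mul_of_nonneg_right _ (norm_nonneg _)
  calc ‖(Real.cos (n * t) : ℂ) - 1‖ ≤ ‖(Real.cos (n * t) : ℂ)‖ + ‖(1:ℂ)‖ := norm_sub_le _ _
    _ ≤ 1 + 1 := by
        refine add_le_add (cos_bound t n) (by norm_num)
    _ = 2 := by norm_num

lemma two_le_norm_Ccos (n : ℕ+) : 2 ≤ ‖Ccos (Real.pi / n) - 1‖ := by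
  have hn : ((n:ℕ):ℝ) ≠ 0 := by exact_mod_cast n.ne_zero
  have harg : ((n:ℕ):ℝ) * (Real.pi / n) = Real.pi := by field_simp
  have hval : (Ccos (Real.pi / n) - 1) (eVec n) = ((-2 : ℝ) : ℂ) • eVec n := by
    rw [ContinuousLinearMap.sub_apply, ContinuousLinearMap.one_apply, Ccos_sub_self_eVec,
      harg, Real.cos_pi]
    norm_num
  have hnorm : ‖(Ccos (Real.pi / n) - 1) (eVec n)‖ = 2 := by
    rw [hval, norm_smul, eVec_norm, mul_one, Complex.norm_real, Real.norm_eq_abs]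
    norm_num
  calc (2:ℝ) = ‖(Ccos (Real.pi / n) - 1) (eVec n)‖ := hnorm.symm
    _ ≤ ‖Ccos (Real.pi / n) - 1‖ * ‖eVec n‖ := ContinuousLinearMap.le_opNorm _ _
    _ = ‖Ccos (Real.pi / n) - 1‖ := by rw [eVec_norm, mul_one]

lemma freq_two_le : ∃ᶠ t in 𝓝[>] (0:ℝ), 2 ≤ ‖Ccos t - 1‖ := by
  rw [Filter.frequently_iff]
  intro U hU
  obtain ⟨ε, hε, hsub⟩ := mem_nhdsGT_iff_exists_Ioo_subset.1 hU
  have hε0 : (0:ℝ) < ε := Set.mem_Ioi.mp hε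
  obtain ⟨m, hm⟩ := exists_nat_gt (Real.pi / ε)
  set N : ℕ+ := ⟨m + 1, Nat.succ_pos m⟩ with hN
  have hNval : ((N:ℕ):ℝ) = (m:ℝ) + 1 := by rw [show (N:ℕ) = m + 1 from rfl]; push_cast; ring
  have hNpos : (0:ℝ) < ((N:ℕ):ℝ) := by rw [hNval]; positivity
  have ht0 : 0 < Real.pi / ((N:ℕ):ℝ) := div_pos Real.pi_pos hNpos
  have htε : Real.pi / ((N:ℕ):ℝ) < ε := by
    rw [div_lt_iff₀ hNpos]
    have h1 : Real.pi / ε < ((N:ℕ):ℝ) := by rw [hNval]; exact hm.trans (by linarith)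
    calc Real.pi = (Real.pi / ε) * ε := by field_simp
      _ < ((N:ℕ):ℝ) * ε := by exact mul_lt_mul_of_pos_right h1 hε0
      _ = ε * ((N:ℕ):ℝ) := mul_comm _ _
  exact ⟨Real.pi / ((N:ℕ):ℝ), hsub ⟨ht0, htε⟩, two_le_norm_Ccos N⟩

lemma Ccos_limsup : Filter.limsup (fun t : ℝ => ‖Ccos t - 1‖) (𝓝[>] (0:ℝ)) = 2 := by
  apply le_antisymm
  · exact Filter.limsup_le_of_le (Filter.IsCoboundedUnder.of_frequently_ge freq_two_le)
      (Eventually.of_forall fun t => Ccos_sub_one_norm_le t)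
  · exact Filter.le_limsup_of_frequently_le freq_two_le
      (Filter.isBoundedUnder_of ⟨2, fun t => Ccos_sub_one_norm_le t⟩)

lemma sin_div_lim : Tendsto (fun y : ℝ => Real.sin y / y) (𝓝[≠] 0) (𝓝 1) := by
  have h := (Real.hasDerivAt_sin 0)
  rw [Real.cos_zero, hasDerivAt_iff_tendsto_slope] at h
  refine h.congr' ?_
  filter_upwards [self_mem_nhdsWithin] with y hy
  simp only [slope_def_field, Real.sin_zero, sub_zero, div_eq_inv_mul]

lemma scalar_limit (c : ℝ) (hc : 0 < c) :
    Tendsto (fun t : ℝ => 2 / t ^ 2 * (Real.cos (c * t) - 1)) (𝓝[>] 0) (𝓝 (-c ^ 2)) := by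
  have hmap : Tendsto (fun t : ℝ => c * t / 2) (𝓝[>] 0) (𝓝[≠] 0) := by
    rw [tendsto_nhdsWithin_iff]
    constructor
    · have h0 : Tendsto (fun t : ℝ => c * t / 2) (𝓝 0) (𝓝 0) :=
        (by fun_prop : Continuous fun t : ℝ => c * t / 2).tendsto' 0 0 (by simp)
      exact h0.mono_left nhdsWithin_le_nhds
    · filter_upwards [self_mem_nhdsWithin] with t ht
      have ht' : (0:ℝ) < t := ht
      have : 0 < c * t / 2 := by positivity
      exact ne_of_gt this
  have hg : Tendsto (fun t : ℝ => Real.sin (c * t / 2) / (c * t / 2)) (𝓝[>] 0) (𝓝 1) :=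
    sin_div_lim.comp hmap
  have hlim : Tendsto (fun t : ℝ =>
      -c ^ 2 * ((Real.sin (c * t / 2) / (c * t / 2)) * (Real.sin (c * t / 2) / (c * t / 2))))
      (𝓝[>] 0) (𝓝 (-c ^ 2)) := by
    have := (hg.mul hg).const_mul (-c ^ 2)
    simpa using this
  refine hlim.congr' ?_
  filter_upwards [self_mem_nhdsWithin] with t ht
  have ht' : (0:ℝ) < t := ht
  have ht0 : (t:ℝ) ≠ 0 := ne_of_gt ht'
  have hcos : Real.cos (c * t) = 1 - 2 * Real.sin (c * t / 2) ^ 2 := by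
    have h := Real.cos_two_mul' (c * t / 2)
    rw [show 2 * (c * t / 2) = c * t by ring] at h
    nlinarith [Real.sin_sq_add_cos_sq (c * t / 2)]
  rw [hcos]
  field_simp
  ring

lemma gen_unbounded :
    ¬∃ A : Hsp →L[ℂ] Hsp,
      ∀ x, Tendsto (fun t : ℝ => (2 / t ^ 2) • (Ccos t x - x)) (𝓝[>] 0) (𝓝 (A x)) := by
  rintro ⟨A, hA⟩
  have key : ∀ n : ℕ+, ‖A (eVec n)‖ = ((n:ℕ):ℝ) ^ 2 := by
    intro n
    have hnpos : (0:ℝ) < ((n:ℕ):ℝ) := by exact_mod_cast n.pos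
    have h1 : Tendsto (fun t : ℝ => (2 / t ^ 2) • (Ccos t (eVec n) - eVec n)) (𝓝[>] 0)
        (𝓝 ((-((n:ℕ):ℝ) ^ 2) • eVec n)) := by
      have heq : ∀ t : ℝ, (2 / t ^ 2) • (Ccos t (eVec n) - eVec n)
          = (2 / t ^ 2 * (Real.cos (n * t) - 1)) • eVec n := by
        intro t
        rw [Ccos_sub_self_eVec, Complex.coe_smul]
        exact smul_smul _ _ _
      simp only [heq]
      exact (scalar_limit _ hnpos).smul_const _
    have h2 := tendsto_nhds_unique (hA (eVec n)) h1
    rw [h2, norm_smul, eVec_norm, mul_one, Real.norm_eq_abs, abs_neg, abs_of_nonneg (by positivity)]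
  set n : ℕ+ := ⟨⌈‖A‖⌉₊ + 1, Nat.succ_pos _⟩ with hn
  have hlt : ‖A‖ < ((n:ℕ):ℝ) := by
    rw [show (n:ℕ) = ⌈‖A‖⌉₊ + 1 from rfl]
    push_cast
    exact lt_of_le_of_lt (Nat.le_ceil _) (by linarith)
  have h1 : ‖A (eVec n)‖ ≤ ‖A‖ * ‖eVec n‖ := A.le_opNorm _
  rw [key, eVec_norm, mul_one] at h1
  have hn1 : (1:ℝ) ≤ ((n:ℕ):ℝ) := by exact_mod_cast n.one_le
  nlinarith

end

theorem diagonal_cosine_example :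
    ∃ C : ℝ → (lp (fun _ : ℕ+ => ℂ) 2 →L[ℂ] lp (fun _ : ℕ+ => ℂ) 2),
      (∀ (t : ℝ) (x : lp (fun _ : ℕ+ => ℂ) 2) (n : ℕ+),
        (C t x : ∀ _ : ℕ+, ℂ) n = (Real.cos (n * t) : ℂ) * (x : ∀ _ : ℕ+, ℂ) n) ∧
      C 0 = 1 ∧
      (∀ t s : ℝ, (2 : ℂ) • (C t * C s) = C (t + s) + C (t - s)) ∧
      (∀ x : lp (fun _ : ℕ+ => ℂ) 2, Continuous fun t : ℝ => C t x) ∧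
      Filter.limsup (fun t : ℝ => ‖C t - 1‖) (𝓝[>] 0) = 2 ∧
      ¬∃ A : lp (fun _ : ℕ+ => ℂ) 2 →L[ℂ] lp (fun _ : ℕ+ => ℂ) 2,
        ∀ x, Tendsto (fun t : ℝ => (2 / t ^ 2) • (C t x - x)) (𝓝[>] 0) (𝓝 (A x)) := by
  exact ⟨Ccos, fun t x n => Ccos_apply t x n, Ccos_zero, Ccos_dAlembert,
    Ccos_strong_continuous, Ccos_limsup, gen_unbounded⟩
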